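/- arXiv:2106.05245 — 4 statements merged into one kernel-verified Lean document; each statement's English description precedes it below -/
import Mathlib

section
/- Let G be a finite undirected graph, let L, R ⊆ V_G be disjoint sets with S = L ∪ R satisfying vol(S) > 0, and let H be the double cover of G. Then the conductance of L₁ ∪ R₂ in H equals the bipartiteness ratio of (L, R) in G, i.e. Φ_H(L₁ ∪ R₂) = β_G(L, R). -/
open Finset

namespace Paper

variable {V : Type*} [Fintype V] [DecidableEq V]

/-- The degree of a vertex `v` in the graph `G`. -/
noncomputable def deg (G : SimpleGraph V) (v : V) : ℕ := {u | G.Adj v u}.ncard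

/-- The volume of a set of vertices: the sum of the degrees of its members. -/
noncomputable def vol (G : SimpleGraph V) (S : Finset V) : ℕ := ∑ v ∈ S, deg G v

/-- The number of ordered pairs `(u,v)` with `u ∈ S`, `v ∈ T` and `{u,v} ∈ E(G)`.
For disjoint `S`, `T` this is the number of edges between `S` and `T`, and
`cutEdges G S Sᶜ = |∂(S)|`. -/
noncomputable def cutEdges (G : SimpleGraph V) (S T : Finset V) : ℕ :=
  {e : V × V | e.1 ∈ S ∧ e.2 ∈ T ∧ G.Adj e.1 e.2}.ncard

/-- The conductance `Φ(S) = |∂(S)| / min(vol(S), vol(V \ S))`. -/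
noncomputable def conductance (G : SimpleGraph V) (S : Finset V) : ℝ :=
  (cutEdges G S Sᶜ : ℝ) / min (vol G S : ℝ) (vol G Sᶜ : ℝ)

/-- The bipartiteness ratio `β(L,R) = 1 - 2 e(L,R) / vol(L ∪ R)`. -/
noncomputable def bipartiteness (G : SimpleGraph V) (L R : Finset V) : ℝ :=
  1 - 2 * (cutEdges G L R : ℝ) / (vol G (L ∪ R) : ℝ)

/-- The double cover of `G`: on vertex set `V ⊕ V` (with `Sum.inl v = v₁` and
`Sum.inr v = v₂`), for every edge `{u,v}` of `G` there are edges `{u₁,v₂}` and `{u₂,v₁}`. -/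
def doubleCover (G : SimpleGraph V) : SimpleGraph (V ⊕ V) :=
  SimpleGraph.fromRel (fun x y => ∃ u v, x = Sum.inl u ∧ y = Sum.inr v ∧ G.Adj u v)

open scoped Classical in
/-- One step of the lazy random walk `W = (1/2)(I + D⁻¹A)`, acting on row vectors:
`p ↦ pW`, so `(lazyWalk G p) x = (1/2) p(x) + (1/2) ∑_{y ~ x} p(y)/deg(y)`. -/
noncomputable def lazyWalk (G : SimpleGraph V) (p : V → ℝ) : V → ℝ :=
  fun x => (1/2) * p x + (1/2) * ∑ y, (if G.Adj y x then p y / (deg G y : ℝ) else 0)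

/-- The simplify operator `σ` on vectors indexed by the double cover:
`(σ∘p)(u₁) = max(0, p(u₁) - p(u₂))` and `(σ∘p)(u₂) = max(0, p(u₂) - p(u₁))`. -/
noncomputable def simplify (p : V ⊕ V → ℝ) : V ⊕ V → ℝ :=
  Sum.elim (fun u => max 0 (p (Sum.inl u) - p (Sum.inr u)))
           (fun u => max 0 (p (Sum.inr u) - p (Sum.inl u)))

/-- `q` is the personalised Pagerank vector `pr(α, s)`, i.e. it satisfies
`q = α s + (1-α) q W`. -/
def IsPagerank (G : SimpleGraph V) (α : ℝ) (s q : V → ℝ) : Prop :=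
  ∀ x, q x = α * s x + (1 - α) * lazyWalk G q x

/-- `p` is an approximate Pagerank vector `apr(α, s, r)` with residual `r`, i.e.
`p + pr(α, r) = pr(α, s)`. -/
def IsApr (G : SimpleGraph V) (α : ℝ) (s r p : V → ℝ) : Prop :=
  ∃ qs qr, IsPagerank G α s qs ∧ IsPagerank G α r qr ∧ ∀ x, p x + qr x = qs x

/-- Given an ordering `ord` of the vertices, the sweep set `S_j` consists of the
first `j` vertices in this ordering. -/
def sweepSet {W : Type*} [Fintype W] (ord : Fin (Fintype.card W) ≃ W) (j : ℕ) :
    Finset W :=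
  Finset.univ.filter fun x => (ord.symm x : ℕ) < j

/-- The size of the support `supp(p) = {u : p(u) ≠ 0}` of a vector. -/
noncomputable def suppCard {W : Type*} (p : W → ℝ) : ℕ := {x | p x ≠ 0}.ncard

/-- The Lovász–Simonovits curve of a vector `p`:
`p[x] = max { ∑_u w(u) p(u) : w ∈ [0,1]^V, ∑_u w(u) deg(u) = x }`. -/
noncomputable def lsCurve (G : SimpleGraph V) (p : V → ℝ) (x : ℝ) : ℝ :=
  sSup {y | ∃ w : V → ℝ, (∀ u, 0 ≤ w u ∧ w u ≤ 1) ∧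
    (∑ u, w u * (deg G u : ℝ)) = x ∧ y = ∑ u, w u * p u}

/-! ### Directed graphs -/

/-- Out-degree of `u` in the digraph with edge relation `E`. -/
noncomputable def degOut (E : V → V → Prop) (u : V) : ℕ := {v | E u v}.ncard

/-- In-degree of `u` in the digraph with edge relation `E`. -/
noncomputable def degIn (E : V → V → Prop) (u : V) : ℕ := {v | E v u}.ncard

/-- Out-volume `vol_out(S) = ∑_{u ∈ S} deg_out(u)`. -/
noncomputable def volOut (E : V → V → Prop) (S : Finset V) : ℕ := ∑ u ∈ S, degOut E u

/-- In-volume `vol_in(S) = ∑_{u ∈ S} deg_in(u)`. -/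
noncomputable def volIn (E : V → V → Prop) (S : Finset V) : ℕ := ∑ u ∈ S, degIn E u

/-- The number of directed edges from `L` to `R`. -/
noncomputable def eDir (E : V → V → Prop) (L R : Finset V) : ℕ :=
  {e : V × V | e.1 ∈ L ∧ e.2 ∈ R ∧ E e.1 e.2}.ncard

/-- The total number of directed edges of the digraph. -/
noncomputable def numEdges (E : V → V → Prop) : ℕ := {e : V × V | E e.1 e.2}.ncard

/-- The flow ratio `F(L,R) = 1 - 2 e(L,R) / (vol_out(L) + vol_in(R))`. -/
noncomputable def flowRatio (E : V → V → Prop) (L R : Finset V) : ℝ :=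
  1 - 2 * (eDir E L R : ℝ) / ((volOut E L : ℝ) + (volIn E R : ℝ))

/-- The semi-double cover of a digraph: on vertex set `V ⊕ V` (with `Sum.inl v = v₁`,
`Sum.inr v = v₂`), for every directed edge `(u,v)` there is an undirected edge `{u₁, v₂}`. -/
def semiDoubleCover (E : V → V → Prop) : SimpleGraph (V ⊕ V) :=
  SimpleGraph.fromRel (fun x y => ∃ u v, x = Sum.inl u ∧ y = Sum.inr v ∧ E u v)

/-! ### The evolving set process -/

/-- `χ_v W χ_S^T`: the probability that one step of the lazy random walk started
at `v` ends in `S`. -/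
noncomputable def walkToSet (H : SimpleGraph V) (S : Finset V) (v : V) : ℝ :=
  (1/2) * (if v ∈ S then (1:ℝ) else 0)
    + (1/2) * (({y | H.Adj v y ∧ y ∈ S}.ncard : ℝ) / (deg H v : ℝ))

/-- The transition kernel `K(S, S')` of the evolving set process: the probability,
over a uniformly random threshold `t ∈ [0,1]`, that `{v : χ_v W χ_S^T ≥ t} = S'`. -/
noncomputable def espKernel (H : SimpleGraph V) (S S' : Finset V) : ℝ :=
  (MeasureTheory.volume {t : ℝ | t ∈ Set.Icc (0:ℝ) 1 ∧
    {v | t ≤ walkToSet H S v} = (S' : Set V)}).toReal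

/-- The transition kernel `K̂(S,S') = (vol(S')/vol(S)) K(S,S')` of the volume-biased
evolving set process. -/
noncomputable def vbKernel (H : SimpleGraph V) (S S' : Finset V) : ℝ :=
  ((vol H S' : ℝ) / (vol H S : ℝ)) * espKernel H S S'

open scoped Classical in
/-- The probability that a sample path `(S₀, …, S_T)` of the volume-biased evolving
set process started from `S₀ = {x}` satisfies the property `P`. -/
noncomputable def pathProb (H : SimpleGraph V) (T : ℕ) (x : V)
    (P : (Fin (T+1) → Finset V) → Prop) : ℝ :=
  ∑ f ∈ Finset.univ.filter (fun f : Fin (T+1) → Finset V => f 0 = {x} ∧ P f),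
    ∏ i : Fin T, vbKernel H (f i.castSucc) (f i.succ)


open scoped Classical

lemma ncard_setOf {α : Type*} [Fintype α] (P : α → Prop) :
    {x | P x}.ncard = ∑ x, if P x then 1 else 0 := by
  rw [← Finset.card_filter]
  rw [← Set.ncard_coe_finset]
  congr 1
  ext x; simp

lemma deg_eq_sum (G : SimpleGraph V) (v : V) :
    deg G v = ∑ u, if G.Adj v u then 1 else 0 := ncard_setOf _

lemma cutEdges_eq_sum (G : SimpleGraph V) (S T : Finset V) :
    cutEdges G S T = ∑ u, ∑ v, if u ∈ S ∧ v ∈ T ∧ G.Adj u v then 1 else 0 := by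
  rw [cutEdges, ncard_setOf, Fintype.sum_prod_type]
  refine Finset.sum_congr rfl fun u _ => Finset.sum_congr rfl fun v _ => ?_
  congr 1

lemma vol_eq_sum (G : SimpleGraph V) (S : Finset V) :
    vol G S = ∑ v, ∑ u, if v ∈ S ∧ G.Adj v u then 1 else 0 := by
  rw [vol, ← Finset.sum_filter_add_sum_filter_not univ (· ∈ S)]
  simp only [Finset.filter_mem_eq_inter, Finset.univ_inter]
  have h1 : ∑ v ∈ S, deg G v = ∑ v ∈ S, ∑ u, if v ∈ S ∧ G.Adj v u then 1 else 0 := by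
    apply Finset.sum_congr rfl
    intro v hv
    rw [deg_eq_sum]
    exact Finset.sum_congr rfl fun u _ => by simp [hv]
  have h2 : ∑ v ∈ univ.filter (· ∉ S), ∑ u, (if v ∈ S ∧ G.Adj v u then (1:ℕ) else 0) = 0 := by
    apply Finset.sum_eq_zero
    intro v hv
    simp only [Finset.mem_filter] at hv
    exact Finset.sum_eq_zero fun u _ => by simp [hv.2]
  rw [h1, h2, Nat.add_zero]

lemma dc_adj_inl_inr (G : SimpleGraph V) (u v : V) :
    (doubleCover G).Adj (Sum.inl u) (Sum.inr v) ↔ G.Adj u v := by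
  simp only [doubleCover, SimpleGraph.fromRel_adj]
  constructor
  · rintro ⟨-, ⟨a, b, h1, h2, h3⟩ | ⟨a, b, h1, h2, h3⟩⟩
    · cases h1; cases h2; exact h3
    · exact absurd h1 (by simp)
  · intro h
    exact ⟨by simp, Or.inl ⟨u, v, rfl, rfl, h⟩⟩

lemma dc_adj_inr_inl (G : SimpleGraph V) (u v : V) :
    (doubleCover G).Adj (Sum.inr u) (Sum.inl v) ↔ G.Adj v u := by
  rw [SimpleGraph.adj_comm, dc_adj_inl_inr]

lemma dc_adj_inl_inl (G : SimpleGraph V) (u v : V) :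
    ¬ (doubleCover G).Adj (Sum.inl u) (Sum.inl v) := by
  simp only [doubleCover, SimpleGraph.fromRel_adj]
  rintro ⟨-, ⟨a, b, h1, h2, h3⟩ | ⟨a, b, h1, h2, h3⟩⟩ <;> simp_all

lemma dc_adj_inr_inr (G : SimpleGraph V) (u v : V) :
    ¬ (doubleCover G).Adj (Sum.inr u) (Sum.inr v) := by
  simp only [doubleCover, SimpleGraph.fromRel_adj]
  rintro ⟨-, ⟨a, b, h1, h2, h3⟩ | ⟨a, b, h1, h2, h3⟩⟩ <;> simp_all

lemma dc_deg_inl (G : SimpleGraph V) (v : V) : deg (doubleCover G) (Sum.inl v) = deg G v := by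
  rw [deg_eq_sum, deg_eq_sum, Fintype.sum_sum_type]
  simp [dc_adj_inl_inl, dc_adj_inl_inr]

lemma dc_deg_inr (G : SimpleGraph V) (v : V) : deg (doubleCover G) (Sum.inr v) = deg G v := by
  rw [deg_eq_sum, deg_eq_sum, Fintype.sum_sum_type]
  simp only [dc_adj_inr_inr, if_false, Finset.sum_const_zero, add_zero]
  simp only [dc_adj_inr_inl]
  exact Finset.sum_congr rfl fun u _ => by rw [G.adj_comm]

lemma vol_split_cut (H : SimpleGraph V) (S : Finset V) :
    vol H S = cutEdges H S S + cutEdges H S Sᶜ := by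
  rw [vol_eq_sum, cutEdges_eq_sum, cutEdges_eq_sum, ← Finset.sum_add_distrib]
  refine Finset.sum_congr rfl fun v _ => ?_
  rw [← Finset.sum_add_distrib]
  refine Finset.sum_congr rfl fun u _ => ?_
  by_cases h1 : v ∈ S <;> by_cases h2 : u ∈ S <;> by_cases h3 : H.Adj v u <;>
    simp [h1, h2, h3]

lemma cutEdges_swap (G : SimpleGraph V) (L R : Finset V) :
    cutEdges G R L = cutEdges G L R := by
  rw [cutEdges_eq_sum, cutEdges_eq_sum, Finset.sum_comm]
  refine Finset.sum_congr rfl fun u _ => Finset.sum_congr rfl fun v _ => ?_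
  rw [G.adj_comm]
  congr 1
  exact propext (by tauto)

section DC
variable (G : SimpleGraph V) (L R : Finset V)

lemma mem_dcset_inl (v : V) :
    Sum.inl v ∈ L.image Sum.inl ∪ R.image Sum.inr ↔ v ∈ L := by simp

lemma mem_dcset_inr (v : V) :
    Sum.inr v ∈ L.image Sum.inl ∪ R.image Sum.inr ↔ v ∈ R := by simp

lemma vol_dc : vol (doubleCover G) (L.image Sum.inl ∪ R.image Sum.inr)
    = vol G L + vol G R := by
  rw [vol, Finset.sum_union (by
    simp [Finset.disjoint_left])]
  rw [Finset.sum_image (fun a _ b _ h => Sum.inl.inj h),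
    Finset.sum_image (fun a _ b _ h => Sum.inr.inj h)]
  simp [dc_deg_inl, dc_deg_inr, vol]

lemma cut_dc_self : cutEdges (doubleCover G)
    (L.image Sum.inl ∪ R.image Sum.inr) (L.image Sum.inl ∪ R.image Sum.inr)
    = 2 * cutEdges G L R := by
  rw [cutEdges_eq_sum, Fintype.sum_sum_type]
  have e1 : ∀ u : V, ∑ y : V ⊕ V,
      (if Sum.inl u ∈ L.image Sum.inl ∪ R.image Sum.inr ∧
        y ∈ L.image Sum.inl ∪ R.image Sum.inr ∧ (doubleCover G).Adj (Sum.inl u) y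
        then 1 else 0)
      = ∑ v : V, if u ∈ L ∧ v ∈ R ∧ G.Adj u v then 1 else 0 := by
    intro u
    rw [Fintype.sum_sum_type]
    simp [dc_adj_inl_inl, dc_adj_inl_inr, mem_dcset_inl, mem_dcset_inr]
  have e2 : ∀ u : V, ∑ y : V ⊕ V,
      (if Sum.inr u ∈ L.image Sum.inl ∪ R.image Sum.inr ∧
        y ∈ L.image Sum.inl ∪ R.image Sum.inr ∧ (doubleCover G).Adj (Sum.inr u) y
        then 1 else 0)
      = ∑ v : V, if u ∈ R ∧ v ∈ L ∧ G.Adj u v then 1 else 0 := by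
    intro u
    rw [Fintype.sum_sum_type]
    simp only [dc_adj_inr_inr, dc_adj_inr_inl, mem_dcset_inl, mem_dcset_inr]
    simp only [and_false, if_false, Finset.sum_const_zero, add_zero]
    refine Finset.sum_congr rfl fun v _ => ?_
    rw [G.adj_comm]
  rw [Finset.sum_congr rfl fun u _ => e1 u]
  conv_lhs => rw [Finset.sum_congr rfl fun u _ => e2 u]
  rw [two_mul]
  congr 1
  · rw [cutEdges_eq_sum]
  · rw [← cutEdges_swap, cutEdges_eq_sum]

lemma vol_dc_compl_ge (hLR : Disjoint L R) :
    vol (doubleCover G) (L.image Sum.inl ∪ R.image Sum.inr)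
      ≤ vol (doubleCover G) (L.image Sum.inl ∪ R.image Sum.inr)ᶜ := by
  have htot : vol (doubleCover G) (L.image Sum.inl ∪ R.image Sum.inr)
      + vol (doubleCover G) (L.image Sum.inl ∪ R.image Sum.inr)ᶜ
      = vol (doubleCover G) Finset.univ := by
    rw [vol, vol, vol, Finset.sum_add_sum_compl]
  have huniv : vol (doubleCover G) Finset.univ = 2 * vol G Finset.univ := by
    rw [vol, Fintype.sum_sum_type]
    simp [dc_deg_inl, dc_deg_inr, vol, two_mul]
  have hLu : vol G L + vol G R ≤ vol G Finset.univ := by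
    rw [vol, vol, ← Finset.sum_union hLR]
    exact Finset.sum_le_sum_of_subset (Finset.subset_univ _)
  have h := vol_dc G L R
  omega

end DC


/-- For a finite undirected graph `G`, disjoint `L, R ⊆ V_G` with
`vol(L ∪ R) > 0`, and `H` the double cover of `G`:
`Φ_H(L₁ ∪ R₂) = β_G(L, R)`. -/
theorem statement0 (G : SimpleGraph V) (L R : Finset V) (hLR : Disjoint L R)
    (hvol : 0 < vol G (L ∪ R)) :
    conductance (doubleCover G) (L.image Sum.inl ∪ R.image Sum.inr)
      = bipartiteness G L R := by
  have hvLR : vol G (L ∪ R) = vol G L + vol G R := Finset.sum_union hLR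
  have hS : vol (doubleCover G) (L.image Sum.inl ∪ R.image Sum.inr) = vol G (L ∪ R) := by
    rw [vol_dc, hvLR]
  have hcut : vol G (L ∪ R) = 2 * cutEdges G L R
      + cutEdges (doubleCover G) (L.image Sum.inl ∪ R.image Sum.inr)
        (L.image Sum.inl ∪ R.image Sum.inr)ᶜ := by
    rw [← hS, vol_split_cut, cut_dc_self]
  have hv0 : (vol G (L ∪ R) : ℝ) ≠ 0 := by positivity
  have hmin : min (vol (doubleCover G) (L.image Sum.inl ∪ R.image Sum.inr) : ℝ)
      (vol (doubleCover G) (L.image Sum.inl ∪ R.image Sum.inr)ᶜ : ℝ)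
      = (vol G (L ∪ R) : ℝ) := by
    rw [min_eq_left (Nat.cast_le.2 (vol_dc_compl_ge G L R hLR)), hS]
  have hcutR : (cutEdges (doubleCover G) (L.image Sum.inl ∪ R.image Sum.inr)
      (L.image Sum.inl ∪ R.image Sum.inr)ᶜ : ℝ)
      = (vol G (L ∪ R) : ℝ) - 2 * (cutEdges G L R : ℝ) := by
    have := congrArg (Nat.cast : ℕ → ℝ) hcut
    push_cast at this
    linarith
  rw [conductance, hmin, hcutR, bipartiteness]
  field_simp


end Paper
end

section
/- Let G be a finite directed graph with semi-double cover H. Let L, R ⊆ V_G be sets with 0 < vol_out(L) + vol_in(R) ≤ |E_G|. Then the flow ratio from L to R in G equals the conductance of L₁ ∪ R₂ in H, i.e. F_G(L, R) = Φ_H(L₁ ∪ R₂). -/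
open Finset

namespace Paper

variable {V : Type*} [Fintype V] [DecidableEq V]

open scoped Classical in
lemma ncard_eq_filter {α : Type*} [Fintype α] (p : α → Prop) :
    {x | p x}.ncard = (Finset.univ.filter p).card := by
  rw [Set.ncard_eq_toFinset_card']
  congr 1
  ext x; simp

lemma adj_inl_inr (E : V → V → Prop) (u v : V) :
    (semiDoubleCover E).Adj (Sum.inl u) (Sum.inr v) ↔ E u v := by
  simp [semiDoubleCover]

lemma adj_inr_inl (E : V → V → Prop) (u v : V) :
    (semiDoubleCover E).Adj (Sum.inr v) (Sum.inl u) ↔ E u v := by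
  simp [semiDoubleCover]

lemma adj_inl_inl (E : V → V → Prop) (u v : V) :
    ¬ (semiDoubleCover E).Adj (Sum.inl u) (Sum.inl v) := by
  simp [semiDoubleCover]

lemma adj_inr_inr (E : V → V → Prop) (u v : V) :
    ¬ (semiDoubleCover E).Adj (Sum.inr u) (Sum.inr v) := by
  simp [semiDoubleCover]

lemma deg_inl (E : V → V → Prop) (u : V) :
    deg (semiDoubleCover E) (Sum.inl u) = degOut E u := by
  unfold deg degOut
  have h : {y | (semiDoubleCover E).Adj (Sum.inl u) y} = Sum.inr '' {v | E u v} := by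
    ext y
    cases y with
    | inl w => simp [semiDoubleCover]
    | inr w => simp [semiDoubleCover]
  rw [h, Set.ncard_image_of_injective _ Sum.inr_injective]

lemma deg_inr (E : V → V → Prop) (u : V) :
    deg (semiDoubleCover E) (Sum.inr u) = degIn E u := by
  unfold deg degIn
  have h : {y | (semiDoubleCover E).Adj (Sum.inr u) y} = Sum.inl '' {v | E v u} := by
    ext y
    cases y with
    | inl w => simp [semiDoubleCover]
    | inr w => simp [semiDoubleCover]
  rw [h, Set.ncard_image_of_injective _ Sum.inl_injective]

lemma vol_LR (E : V → V → Prop) (L R : Finset V) :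
    vol (semiDoubleCover E) (L.image Sum.inl ∪ R.image Sum.inr)
      = volOut E L + volIn E R := by
  unfold vol volOut volIn
  rw [Finset.sum_union]
  · rw [Finset.sum_image (by simp), Finset.sum_image (by simp)]
    simp [deg_inl, deg_inr]
  · simp [Finset.disjoint_left]

open scoped Classical in
lemma volOut_univ (E : V → V → Prop) : volOut E Finset.univ = numEdges E := by
  unfold volOut degOut numEdges
  simp_rw [ncard_eq_filter]
  rw [Finset.card_filter, Fintype.sum_prod_type]
  refine Finset.sum_congr rfl fun u _ => ?_
  rw [Finset.card_filter]

open scoped Classical in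
lemma volIn_univ (E : V → V → Prop) : volIn E Finset.univ = numEdges E := by
  unfold volIn degIn numEdges
  simp_rw [ncard_eq_filter]
  rw [Finset.card_filter, Fintype.sum_prod_type_right]
  refine Finset.sum_congr rfl fun u _ => ?_
  rw [Finset.card_filter]

lemma vol_univ (E : V → V → Prop) :
    vol (semiDoubleCover E) Finset.univ = 2 * numEdges E := by
  unfold vol
  rw [Fintype.sum_sum_type]
  simp only [deg_inl, deg_inr]
  have h1 : ∑ u : V, degOut E u = numEdges E := volOut_univ E
  have h2 : ∑ u : V, degIn E u = numEdges E := volIn_univ E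
  omega

open scoped Classical in
lemma cut_split (G : SimpleGraph V) (S : Finset V) :
    cutEdges G S Sᶜ + cutEdges G S S = vol G S := by
  unfold cutEdges vol deg
  simp_rw [ncard_eq_filter, Finset.card_filter, Fintype.sum_prod_type]
  rw [← Finset.sum_add_distrib, ← Finset.univ_inter S, ← Finset.sum_ite_mem]
  refine Finset.sum_congr rfl fun x _ => ?_
  rw [← Finset.sum_add_distrib]
  by_cases hx : x ∈ S
  · simp only [hx, if_true]
    refine Finset.sum_congr rfl fun y _ => ?_
    by_cases hy : y ∈ S <;> by_cases ha : G.Adj x y <;> simp [hx, hy, ha]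
  · simp [hx]

open scoped Classical in
lemma cut_inside (E : V → V → Prop) (L R : Finset V) :
    cutEdges (semiDoubleCover E) (L.image Sum.inl ∪ R.image Sum.inr)
      (L.image Sum.inl ∪ R.image Sum.inr) = 2 * eDir E L R := by
  unfold cutEdges eDir
  set S := L.image Sum.inl ∪ R.image Sum.inr with hS
  have hmemL : ∀ u : V, Sum.inl u ∈ S ↔ u ∈ L := by intro u; simp [hS]
  have hmemR : ∀ v : V, Sum.inr v ∈ S ↔ v ∈ R := by intro v; simp [hS]
  set D : Set (V × V) := {e | e.1 ∈ L ∧ e.2 ∈ R ∧ E e.1 e.2} with hD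
  set f : V × V → (V ⊕ V) × (V ⊕ V) := fun p => (Sum.inl p.1, Sum.inr p.2) with hf
  set g : V × V → (V ⊕ V) × (V ⊕ V) := fun p => (Sum.inr p.2, Sum.inl p.1) with hg
  have hset : {e : (V ⊕ V) × (V ⊕ V) | e.1 ∈ S ∧ e.2 ∈ S ∧ (semiDoubleCover E).Adj e.1 e.2}
      = f '' D ∪ g '' D := by
    ext ⟨x, y⟩
    cases x with
    | inl a =>
      cases y with
      | inl b => simp [adj_inl_inl, hf, hg]
      | inr b =>
        simp only [Set.mem_setOf_eq, Set.mem_union, Set.mem_image, hf, hg, hD,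
          adj_inl_inr, hmemL, hmemR, Prod.mk.injEq]
        aesop
    | inr a =>
      cases y with
      | inl b =>
        simp only [Set.mem_setOf_eq, Set.mem_union, Set.mem_image, hf, hg, hD,
          adj_inr_inl, hmemL, hmemR, Prod.mk.injEq]
        aesop
      | inr b => simp [adj_inr_inr, hf, hg]
  rw [hset, Set.ncard_union_eq]
  · have hfinj : Function.Injective f := by
      intro p q h
      simp [hf, Prod.ext_iff] at h
      exact Prod.ext h.1 h.2
    have hginj : Function.Injective g := by
      intro p q h
      simp [hg, Prod.ext_iff] at h
      exact Prod.ext h.2 h.1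
    rw [Set.ncard_image_of_injective _ hfinj, Set.ncard_image_of_injective _ hginj]
    ring
  · rw [Set.disjoint_left]
    rintro _ ⟨p, -, rfl⟩ ⟨q, -, hq⟩
    simp [hf, hg, Prod.ext_iff] at hq

/-- Let `G` be a finite digraph (edge relation `E`) with semi-double
cover `H`, and `L, R ⊆ V_G` with `0 < vol_out(L) + vol_in(R) ≤ |E_G|`. Then
`F_G(L,R) = Φ_H(L₁ ∪ R₂)`. -/
theorem statement8 (E : V → V → Prop) (L R : Finset V)
    (h0 : 0 < volOut E L + volIn E R)
    (h1 : volOut E L + volIn E R ≤ numEdges E) :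
    flowRatio E L R
      = conductance (semiDoubleCover E) (L.image Sum.inl ∪ R.image Sum.inr) := by
  set S := L.image Sum.inl ∪ R.image Sum.inr with hS
  have hvolS : vol (semiDoubleCover E) S = volOut E L + volIn E R := vol_LR E L R
  have hsplit := cut_split (semiDoubleCover E) S
  have hin : cutEdges (semiDoubleCover E) S S = 2 * eDir E L R := cut_inside E L R
  have hVU : vol (semiDoubleCover E) S + vol (semiDoubleCover E) Sᶜ
      = 2 * numEdges E := by
    rw [← vol_univ E]
    unfold vol
    exact Finset.sum_add_sum_compl S _
  have hle : vol (semiDoubleCover E) S ≤ vol (semiDoubleCover E) Sᶜ := by omega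
  have hmin : min (vol (semiDoubleCover E) S : ℝ) (vol (semiDoubleCover E) Sᶜ : ℝ)
      = (vol (semiDoubleCover E) S : ℝ) := by
    exact min_eq_left (by exact_mod_cast hle)
  have hcut : (cutEdges (semiDoubleCover E) S Sᶜ : ℝ)
      = ((volOut E L : ℝ) + (volIn E R : ℝ)) - 2 * (eDir E L R : ℝ) := by
    have : cutEdges (semiDoubleCover E) S Sᶜ + 2 * eDir E L R
        = volOut E L + volIn E R := by omega
    have := congrArg (fun n : ℕ => (n : ℝ)) this
    push_cast at this
    linarith
  have hpos : (0:ℝ) < (volOut E L : ℝ) + (volIn E R : ℝ) := by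
    exact_mod_cast h0
  unfold conductance flowRatio
  rw [hmin, hcut, hvolS]
  push_cast
  field_simp


end Paper
end

section
/- Let H be a finite undirected graph in which every vertex has positive degree, with lazy random walk matrix W, and let α ∈ (0,1]. For row vectors p, r on V_H and any vertex w ∈ V_H, define p' = p + α·r(w)·χ_w and r' = r − r(w)·χ_w + (1 − α)·r(w)·χ_w W. Then p' + pr(α, r') = p + pr(α, r). (In particular, the dcpush operation preserves the approximate-Pagerank invariant: if p + pr(α, r) = pr(α, χ_{v₁}) before a push, the same holds after the push.) -/
open Finset

namespace Paper

variable {V : Type*} [Fintype V] [DecidableEq V]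

open scoped Classical in
lemma lazyWalk_comb (G : SimpleGraph V) (f g h : V → ℝ) (c : ℝ) (x : V) :
    lazyWalk G (fun y => f y - g y - c * h y) x
      = lazyWalk G f x - lazyWalk G g x - c * lazyWalk G h x := by
  unfold lazyWalk
  have e : ∀ y, (if G.Adj y x then (f y - g y - c * h y) / (deg G y : ℝ) else 0)
      = (if G.Adj y x then f y / (deg G y : ℝ) else 0)
        - (if G.Adj y x then g y / (deg G y : ℝ) else 0)
        - c * (if G.Adj y x then h y / (deg G y : ℝ) else 0) := by
    intro y; split <;> ring
  simp only [e]
  rw [Finset.sum_sub_distrib, Finset.sum_sub_distrib, ← Finset.mul_sum]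
  ring

open scoped Classical in
lemma deg_eq_card (G : SimpleGraph V) (y : V) :
    deg G y = (univ.filter (G.Adj y)).card := by
  rw [deg, Set.ncard_eq_toFinset_card']
  congr 1
  ext u
  simp

open scoped Classical in
lemma lazyWalk_l1 (G : SimpleGraph V) (hdeg : ∀ v, 0 < deg G v) (q : V → ℝ) :
    ∑ x, |lazyWalk G q x| ≤ ∑ x, |q x| := by
  have hstep : ∀ x, |lazyWalk G q x| ≤
      (1/2) * |q x| + (1/2) * ∑ y, (if G.Adj y x then |q y| / (deg G y : ℝ) else 0) := by
    intro x
    unfold lazyWalk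
    refine (abs_add_le _ _).trans ?_
    rw [abs_mul, abs_mul]
    gcongr
    · rw [abs_of_nonneg] <;> norm_num
    · rw [abs_of_nonneg] <;> norm_num
    refine (Finset.abs_sum_le_sum_abs _ _).trans_eq ?_
    refine Finset.sum_congr rfl fun y _ => ?_
    split
    · rw [abs_div, Nat.abs_cast]
    · simp
  calc ∑ x, |lazyWalk G q x|
      ≤ ∑ x, ((1/2) * |q x| + (1/2) * ∑ y, (if G.Adj y x then |q y| / (deg G y : ℝ) else 0)) :=
        Finset.sum_le_sum fun x _ => hstep x
    _ = (1/2) * ∑ x, |q x|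
        + (1/2) * ∑ y, ∑ x, (if G.Adj y x then |q y| / (deg G y : ℝ) else 0) := by
        rw [Finset.sum_add_distrib, ← Finset.mul_sum, ← Finset.mul_sum, Finset.sum_comm]
    _ = ∑ x, |q x| := by
        have key : ∀ y : V, ∑ x, (if G.Adj y x then |q y| / (deg G y : ℝ) else 0) = |q y| := by
          intro y
          rw [← Finset.sum_filter, Finset.sum_const, nsmul_eq_mul, ← deg_eq_card]
          have hne : (deg G y : ℝ) ≠ 0 := Nat.cast_ne_zero.2 (hdeg y).ne'
          field_simp
        simp only [key]
        ring

/-- Let `H` be a finite undirected graph with positive degrees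
everywhere, with lazy random walk matrix `W`, and `α ∈ (0,1]`. For row vectors
`p, r` and a vertex `w`, set `p' = p + α r(w) χ_w` and
`r' = r - r(w) χ_w + (1-α) r(w) χ_w W`. Then `p' + pr(α, r') = p + pr(α, r)`
(expressed via the defining equation of the personalised Pagerank vectors). -/
theorem statement10 (H : SimpleGraph V) (hdeg : ∀ v, 0 < deg H v)
    (α : ℝ) (hα0 : 0 < α) (hα1 : α ≤ 1)
    (p r : V → ℝ) (w : V) (p' r' : V → ℝ)
    (hp' : p' = fun x => p x + α * r w * (if x = w then (1:ℝ) else 0))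
    (hr' : r' = fun x => r x - r w * (if x = w then (1:ℝ) else 0)
        + (1 - α) * r w * lazyWalk H (fun y => if y = w then (1:ℝ) else 0) x)
    (qr qr' : V → ℝ)
    (hqr : IsPagerank H α r qr) (hqr' : IsPagerank H α r' qr') :
    ∀ x, p' x + qr' x = p x + qr x := by
  classical
  set d : V → ℝ := fun y => qr y - qr' y - (α * r w) * (if y = w then (1:ℝ) else 0) with hdd
  have hdeq : ∀ x, d x = (1 - α) * lazyWalk H d x := by
    intro x
    have h1 := hqr x
    have h2 := hqr' x
    rw [hr'] at h2
    simp only [hdd, lazyWalk_comb H qr qr' (fun y => if y = w then (1:ℝ) else 0) (α * r w) x]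
    linear_combination h1 - h2
  have hS : ∑ x, |d x| ≤ (1 - α) * ∑ x, |d x| := by
    calc ∑ x, |d x| = (1 - α) * ∑ x, |lazyWalk H d x| := by
          rw [Finset.mul_sum]
          refine Finset.sum_congr rfl fun x _ => ?_
          rw [hdeq x, abs_mul, abs_of_nonneg (by linarith)]
      _ ≤ (1 - α) * ∑ x, |d x| := by
          have := lazyWalk_l1 H hdeg d
          have h1α : 0 ≤ 1 - α := by linarith
          exact mul_le_mul_of_nonneg_left this h1α
  have hSnn : 0 ≤ ∑ x, |d x| := Finset.sum_nonneg fun x _ => abs_nonneg _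
  have hS0 : ∑ x, |d x| = 0 := by nlinarith
  have hd0 : ∀ x, d x = 0 := by
    intro x
    have := (Finset.sum_eq_zero_iff_of_nonneg (fun x _ => abs_nonneg (d x))).1 hS0 x
      (Finset.mem_univ x)
    exact abs_eq_zero.1 this
  intro x
  have hx := hd0 x
  simp only [hdd] at hx
  rw [hp']
  simp only []
  linarith

end Paper
end

section
/- Let G be a finite directed graph with semi-double cover H. Let ε ∈ [0,1), let S ⊆ V_H be an ε-simple set with vol(S) ≤ vol(V_H)/2, let P = {u₁, u₂ : u ∈ V_G, u₁ ∈ S and u₂ ∈ S}, and set S' = S ∖ P, assuming vol(S') > 0. Then Φ_H(S') ≤ (1/(1 − ε))·(Φ_H(S) + ε). -/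
open Finset

namespace Paper

variable {V : Type*} [Fintype V] [DecidableEq V]

open scoped Classical in
private lemma cut_le_vol_aux14 (H : SimpleGraph V) (A B : Finset V) :
    cutEdges H A B ≤ vol H B := by
  classical
  rw [cutEdges, Set.ncard_eq_toFinset_card']
  have hsub : {e : V × V | e.1 ∈ A ∧ e.2 ∈ B ∧ H.Adj e.1 e.2}.toFinset ⊆
      B.biUnion (fun y => Finset.image (fun u => (u, y)) {u | H.Adj y u}.toFinset) := by
    intro e he
    simp only [Set.mem_toFinset, Set.mem_setOf_eq] at he
    simp only [Finset.mem_biUnion, Finset.mem_image, Set.mem_toFinset, Set.mem_setOf_eq]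
    exact ⟨e.2, he.2.1, e.1, he.2.2.symm, rfl⟩
  calc {e : V × V | e.1 ∈ A ∧ e.2 ∈ B ∧ H.Adj e.1 e.2}.toFinset.card
      ≤ _ := Finset.card_le_card hsub
    _ ≤ ∑ y ∈ B, (Finset.image (fun u => (u, y)) {u | H.Adj y u}.toFinset).card :=
        Finset.card_biUnion_le
    _ ≤ ∑ y ∈ B, deg H y := by
        refine Finset.sum_le_sum fun y _ => ?_
        calc _ ≤ {u | H.Adj y u}.toFinset.card := Finset.card_image_le
          _ = deg H y := (Set.ncard_eq_toFinset_card' _).symm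
    _ = vol H B := rfl

private lemma cut_mono_aux14 (H : SimpleGraph V) (S P : Finset V) :
    cutEdges H (S \ P) (S \ P)ᶜ ≤ cutEdges H S Sᶜ + vol H P := by
  classical
  have hsub : {e : V × V | e.1 ∈ S \ P ∧ e.2 ∈ (S \ P)ᶜ ∧ H.Adj e.1 e.2} ⊆
      {e : V × V | e.1 ∈ S ∧ e.2 ∈ Sᶜ ∧ H.Adj e.1 e.2} ∪
      {e : V × V | e.1 ∈ S \ P ∧ e.2 ∈ P ∧ H.Adj e.1 e.2} := by
    intro e he
    simp only [Set.mem_setOf_eq, Finset.mem_sdiff, Finset.mem_compl] at he ⊢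
    obtain ⟨⟨h1S, h1P⟩, h2, hadj⟩ := he
    by_cases h2P : e.2 ∈ P
    · exact Or.inr ⟨⟨h1S, h1P⟩, h2P, hadj⟩
    · exact Or.inl ⟨h1S, fun h2S => h2 ⟨h2S, h2P⟩, hadj⟩
  calc cutEdges H (S \ P) (S \ P)ᶜ
      ≤ _ := Set.ncard_le_ncard hsub ((Set.toFinite _).union (Set.toFinite _))
    _ ≤ cutEdges H S Sᶜ + cutEdges H (S \ P) P :=
        Set.ncard_union_le _ _
    _ ≤ cutEdges H S Sᶜ + vol H P :=
        Nat.add_le_add_left (cut_le_vol_aux14 H _ P) _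

private theorem statement14_general {W : Type*} [Fintype W] [DecidableEq W]
    (H : SimpleGraph W) (ε : ℝ) (hε0 : 0 ≤ ε) (hε1 : ε < 1)
    (S P : Finset W) (hPS : P ⊆ S)
    (hεsimple : (vol H P : ℝ) ≤ ε * (vol H S : ℝ))
    (hhalf : 2 * vol H S ≤ vol H Finset.univ)
    (hS' : 0 < vol H (S \ P)) :
    conductance H (S \ P)
      ≤ (1 / (1 - ε)) * (conductance H S + ε) := by
  set S' := S \ P with hS'def
  have hvol_split : vol H S' + vol H P = vol H S := Finset.sum_sdiff hPS
  have hv'lev : vol H S' ≤ vol H S := le_of_add_le_left hvol_split.le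
  have hcompl : ∀ A : Finset W, vol H A + vol H Aᶜ = vol H Finset.univ := by
    intro A; exact Finset.sum_add_sum_compl A _
  have hvpos : 0 < vol H S := lt_of_lt_of_le hS' hv'lev
  have hminS : min (vol H S : ℝ) (vol H Sᶜ : ℝ) = (vol H S : ℝ) := by
    have := hcompl S
    have : vol H S ≤ vol H Sᶜ := by omega
    exact min_eq_left (by exact_mod_cast this)
  have hminS' : min (vol H S' : ℝ) (vol H S'ᶜ : ℝ) = (vol H S' : ℝ) := by
    have h1 := hcompl S'
    have : vol H S' ≤ vol H S'ᶜ := by omega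
    exact min_eq_left (by exact_mod_cast this)
  have hcut : (cutEdges H S' S'ᶜ : ℝ) ≤ (cutEdges H S Sᶜ : ℝ) + (vol H P : ℝ) := by
    exact_mod_cast cut_mono_aux14 H S P
  have hv'R : (0:ℝ) < (vol H S' : ℝ) := by exact_mod_cast hS'
  have hvR : (0:ℝ) < (vol H S : ℝ) := by exact_mod_cast hvpos
  have h1ε : (0:ℝ) < 1 - ε := by linarith
  have hv'ge : (1 - ε) * (vol H S : ℝ) ≤ (vol H S' : ℝ) := by
    have : (vol H S' : ℝ) + (vol H P : ℝ) = (vol H S : ℝ) := by exact_mod_cast hvol_split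
    nlinarith
  rw [conductance, conductance, hminS, hminS']
  have hrw : (1 / (1 - ε)) * ((cutEdges H S Sᶜ : ℝ) / (vol H S : ℝ) + ε)
      = ((cutEdges H S Sᶜ : ℝ) + ε * (vol H S : ℝ)) / ((1 - ε) * (vol H S : ℝ)) := by
    field_simp
  rw [hrw, div_le_div_iff₀ hv'R (by positivity)]
  have hc' : (cutEdges H S' S'ᶜ : ℝ) ≤ (cutEdges H S Sᶜ : ℝ) + ε * (vol H S : ℝ) := by
    linarith
  have := mul_le_mul hc' hv'ge (by positivity) (by positivity)
  linarith

/-- Let `G` be a finite digraph (edge relation `E`) with semi-double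
cover `H`. Let `ε ∈ [0,1)`, let `S ⊆ V_H` be ε-simple with `vol(S) ≤ vol(V_H)/2`,
let `P = {u₁, u₂ : u ∈ V_G, u₁ ∈ S and u₂ ∈ S}` and `S' = S ∖ P` with `vol(S') > 0`.
Then `Φ_H(S') ≤ (1/(1-ε)) (Φ_H(S) + ε)`. -/
theorem statement14 (E : V → V → Prop) (ε : ℝ) (hε0 : 0 ≤ ε) (hε1 : ε < 1)
    (S P : Finset (V ⊕ V))
    (hP : P = ((Finset.univ.filter fun u : V =>
                  Sum.inl u ∈ S ∧ Sum.inr u ∈ S).image Sum.inl)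
            ∪ ((Finset.univ.filter fun u : V =>
                  Sum.inl u ∈ S ∧ Sum.inr u ∈ S).image Sum.inr))
    (hεsimple : (vol (semiDoubleCover E) P : ℝ) ≤ ε * (vol (semiDoubleCover E) S : ℝ))
    (hhalf : 2 * vol (semiDoubleCover E) S ≤ vol (semiDoubleCover E) Finset.univ)
    (hS' : 0 < vol (semiDoubleCover E) (S \ P)) :
    conductance (semiDoubleCover E) (S \ P)
      ≤ (1 / (1 - ε)) * (conductance (semiDoubleCover E) S + ε) := by
  have hPS : P ⊆ S := by
    intro x hx
    rw [hP] at hx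
    simp only [Finset.mem_union, Finset.mem_image, Finset.mem_filter, Finset.mem_univ,
      true_and] at hx
    rcases hx with ⟨u, ⟨h1, h2⟩, rfl⟩ | ⟨u, ⟨h1, h2⟩, rfl⟩
    · exact h1
    · exact h2
  exact statement14_general (semiDoubleCover E) ε hε0 hε1 S P hPS hεsimple hhalf hS'


end Paper
end
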